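/- The subspace g = ⟨A⟩ ⊕ 𝓔 ⊕ T𝓔 ⊕ ⋯ ⊕ T^{m−1}𝓔 of End_F(U) is a Lie subalgebra of gl(U) of dimension dim_F U + 1; explicitly, [A, T^j g(E)] = j·T^j g(E) for all g ∈ F[X] and 0 ≤ j < m, and the elements of 𝓔 ⊕ T𝓔 ⊕ ⋯ ⊕ T^{m−1}𝓔 commute with each other. In particular s = ⟨A⟩ ⊕ ⟨T⟩ is a 2-dimensional subalgebra with [A,T] = T. -/

import Mathlib

open Polynomial

/-- The shifted polynomial `p_{i+1}(X) = p₁(X + i)`: we use 0-based indexing for the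
paper's `p_i(X) = p₁(X + (i−1))`, `1 ≤ i ≤ m`. -/
noncomputable def pShift {F : Type*} [Field F] (q : Polynomial F) (i : ℕ) : Polynomial F :=
  q.comp (X + C (i : F))

/-- The `F[X]`-module `U = U₁ ⊕ ⋯ ⊕ U_m`, where `U_{i+1} = F[X]·u_{i+1} ≅
F[X]/(p_{i+1}^{s_{i+1}})` (0-based indexing). -/
def Uspace (F : Type*) [Field F] (q : Polynomial F) (m : ℕ) (s : Fin m → ℕ) : Type _ :=
  (i : Fin m) → Polynomial F ⧸ Ideal.span {(pShift q i) ^ (s i)}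

noncomputable instance {F : Type*} [Field F] (q : Polynomial F) (m : ℕ) (s : Fin m → ℕ) :
    AddCommGroup (Uspace F q m s) :=
  inferInstanceAs (AddCommGroup ((i : Fin m) → Polynomial F ⧸ Ideal.span {(pShift q i) ^ (s i)}))

noncomputable instance {F : Type*} [Field F] (q : Polynomial F) (m : ℕ) (s : Fin m → ℕ) :
    Module F (Uspace F q m s) :=
  inferInstanceAs (Module F ((i : Fin m) → Polynomial F ⧸ Ideal.span {(pShift q i) ^ (s i)}))

/-- The operator `A ∈ End_F(U)`: multiplication by `X`. -/
noncomputable def Aop (F : Type*) [Field F] (q : Polynomial F) (m : ℕ) (s : Fin m → ℕ) :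
    Module.End F (Uspace F q m s) :=
  LinearMap.pi fun i =>
    (LinearMap.mulLeft F (Ideal.Quotient.mk (Ideal.span {(pShift q i) ^ (s i)}) X)).comp
      (LinearMap.proj i)

/-- The operator `E ∈ End_F(U)`: the `F[X]`-linear map with `E u_i = (X + (i−1)) u_i`
(0-based: on the `i`-th component it is multiplication by `X + i`). -/
noncomputable def Eop (F : Type*) [Field F] (q : Polynomial F) (m : ℕ) (s : Fin m → ℕ) :
    Module.End F (Uspace F q m s) :=
  LinearMap.pi fun i =>
    (LinearMap.mulLeft F
        (Ideal.Quotient.mk (Ideal.span {(pShift q i) ^ (s i)}) (X + C (i : F)))).comp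
      (LinearMap.proj i)

/-- Componentwise multiplication by the polynomial `g` on `U` (the action `u ↦ g(X)·u`). -/
noncomputable def polySmul {F : Type*} [Field F] {q : Polynomial F} {m : ℕ} {s : Fin m → ℕ}
    (g : Polynomial F) (u : Uspace F q m s) : Uspace F q m s :=
  fun i => Ideal.Quotient.mk (Ideal.span {(pShift q i) ^ (s i)}) g * u i

/-- The canonical generator `u_{i+1}` of the summand `U_{i+1}` (0-based). -/
noncomputable def uGen (F : Type*) [Field F] (q : Polynomial F) (m : ℕ) (s : Fin m → ℕ)
    (i : Fin m) : Uspace F q m s :=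
  Pi.single i 1

/-- The standing assumptions on the data: `p₁ = q` is monic irreducible of degree `d`,
`m > 1`, and `s₁ ≥ s₂ ≥ ⋯ ≥ s_m ≥ 1`. -/
structure GoodData (F : Type*) [Field F] (q : Polynomial F) (d m : ℕ) (s : Fin m → ℕ) :
    Prop where
  monic : q.Monic
  irr : Irreducible q
  deg : q.natDegree = d
  hm : 1 < m
  dec : ∀ i j : Fin m, i ≤ j → s j ≤ s i
  pos : ∀ i, 1 ≤ s i

/-- `T` is the operator of the paper: the unique `F`-linear endomorphism of `U` with
`T u₁ = 0`, `T u_i = p_{i−1}(X)^{s_{i−1}−s_i} u_{i−1}` for `2 ≤ i ≤ m`, and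
`T(g(X+1)·u) = g(X)·(T u)` for all `g ∈ F[X]`, `u ∈ U`. -/
def IsTmap {F : Type*} [Field F] (q : Polynomial F) (m : ℕ) (s : Fin m → ℕ)
    (T : Module.End F (Uspace F q m s)) : Prop :=
  (∀ h0 : 0 < m, T (uGen F q m s ⟨0, h0⟩) = 0) ∧
  (∀ (i : ℕ) (hi : i + 1 < m),
      T (uGen F q m s ⟨i + 1, hi⟩) =
        polySmul ((pShift q i) ^ (s ⟨i, by omega⟩ - s ⟨i + 1, hi⟩))
          (uGen F q m s ⟨i, by omega⟩)) ∧
  (∀ (g : Polynomial F) (u : Uspace F q m s),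
      T (polySmul (g.comp (X + C 1)) u) = polySmul g (T u))

/-- The linear map `F[X] → End_F(U)`, `g ↦ T^j ∘ g(E)`, whose image is the subspace
`T^j·𝓔` of `End_F(U)`. -/
noncomputable def psiMap {F : Type*} [Field F] (q : Polynomial F) (m : ℕ) (s : Fin m → ℕ)
    (T : Module.End F (Uspace F q m s)) (j : ℕ) :
    Polynomial F →ₗ[F] Module.End F (Uspace F q m s) :=
  (LinearMap.mulLeft F (T ^ j)).comp (Polynomial.aeval (Eop F q m s)).toLinearMap


/-! ### Auxiliary lemmas -/

section AuxPoly

variable {F : Type*} [Field F]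

lemma comp_X_add_C_comp (g : Polynomial F) (a b : F) :
    (g.comp (X + C a)).comp (X + C b) = g.comp (X + C (a + b)) := by
  rw [Polynomial.comp_assoc]
  congr 1
  simp only [add_comp, X_comp, C_comp]
  rw [add_assoc, ← C_add, add_comm b a]

lemma pShift_zero (q : Polynomial F) : pShift q 0 = q := by
  simp [pShift]

lemma pShift_add_comp (q : Polynomial F) (a b : ℕ) :
    (pShift q (a + b)).comp (X + C (-(a : F))) = pShift q b := by
  unfold pShift
  rw [comp_X_add_C_comp]
  have : ((a + b : ℕ) : F) + (-(a : F)) = (b : F) := by push_cast; ring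
  rw [this]

lemma pShift_monic {q : Polynomial F} (hq : q.Monic) (i : ℕ) : (pShift q i).Monic :=
  hq.comp_X_add_C _

lemma pShift_ne_zero {q : Polynomial F} (hq : q.Monic) (i : ℕ) : pShift q i ≠ 0 :=
  (pShift_monic hq i).ne_zero

lemma pShift_natDegree (q : Polynomial F) (i : ℕ) : (pShift q i).natDegree = q.natDegree := by
  unfold pShift
  rw [natDegree_comp, natDegree_X_add_C, mul_one]

lemma comp_dvd_iff (p w : Polynomial F) (c : F) :
    p.comp (X + C c) ∣ w.comp (X + C c) ↔ p ∣ w := by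
  constructor
  · intro h
    have h2 := (dvd_comp_X_add_C_iff (p.comp (X + C c)) w c).mp h
    rwa [sub_eq_add_neg, ← C_neg, comp_X_add_C_comp, add_neg_cancel, C_0, add_zero, comp_X] at h2
  · rintro ⟨e, rfl⟩
    exact ⟨e.comp (X + C c), by rw [mul_comp]⟩

end AuxPoly

section Aux

variable {F : Type*} [Field F] (q : Polynomial F) (m : ℕ) (s : Fin m → ℕ)

/-- The element of `U` which is the class of `h` in the `i`-th component and `0` elsewhere. -/
noncomputable def sgl (i : Fin m) (h : Polynomial F) : Uspace F q m s :=
  Pi.single i (Ideal.Quotient.mk (Ideal.span {(pShift q (i : ℕ)) ^ (s i)}) h)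

lemma smul_mk (I : Ideal (Polynomial F)) (a : F) (h : Polynomial F) :
    a • (Ideal.Quotient.mk I h) = Ideal.Quotient.mk I (C a * h) := by
  rw [← smul_eq_C_mul]
  rfl

lemma sgl_add (i : Fin m) (h h' : Polynomial F) :
    sgl q m s i (h + h') = sgl q m s i h + sgl q m s i h' := by
  simp only [sgl, map_add, Pi.single_add]
  rfl

lemma sgl_smul (a : F) (i : Fin m) (h : Polynomial F) :
    a • sgl q m s i h = sgl q m s i (C a * h) := by
  rw [sgl, sgl, ← smul_mk]
  exact (Pi.single_smul i a _).symm

lemma polySmul_sgl (g : Polynomial F) (i : Fin m) (h : Polynomial F) :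
    polySmul g (sgl q m s i h) = sgl q m s i (g * h) := by
  funext k
  by_cases hk : k = i
  · subst hk
    simp only [polySmul, sgl, Pi.single_eq_same, ← map_mul]
  · simp only [polySmul, sgl, Pi.single_eq_of_ne hk, mul_zero]

lemma uGen_eq (i : Fin m) : uGen F q m s i = sgl q m s i 1 := by
  simp only [uGen, sgl, map_one]
  rfl

lemma polySmul_zero' (g : Polynomial F) : polySmul (q := q) (m := m) (s := s) g 0 = 0 := by
  funext k
  exact mul_zero _

lemma polySmul_polySmul (a b : Polynomial F) (u : Uspace F q m s) :
    polySmul a (polySmul b u) = polySmul (a * b) u := by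
  funext k
  simp [polySmul, map_mul, mul_assoc]

lemma sgl_eq_zero_iff (i : Fin m) (h : Polynomial F) :
    sgl q m s i h = 0 ↔ pShift q (i : ℕ) ^ (s i) ∣ h := by
  constructor
  · intro hz
    have := congrFun hz i
    rw [sgl, Pi.single_eq_same] at this
    exact (Ideal.mem_span_singleton).mp (Ideal.Quotient.eq_zero_iff_mem.mp this)
  · intro hd
    have : Ideal.Quotient.mk (Ideal.span {(pShift q (i : ℕ)) ^ (s i)}) h = 0 :=
      Ideal.Quotient.eq_zero_iff_mem.mpr (Ideal.mem_span_singleton.mpr hd)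
    rw [sgl, this, Pi.single_zero]
    rfl

lemma Uspace_rep (u : Uspace F q m s) :
    ∃ h : Fin m → Polynomial F, u = ∑ i, sgl q m s i (h i) := by
  choose h hh using fun i : Fin m =>
    Ideal.Quotient.mk_surjective (I := Ideal.span {(pShift q (i : ℕ)) ^ (s i)}) (u i)
  refine ⟨h, ?_⟩
  have : ∀ i, sgl q m s i (h i) = Pi.single i (u i) := by
    intro i; rw [sgl, hh]
  rw [funext this]
  exact (Finset.univ_sum_single (show (i : Fin m) → Polynomial F ⧸ Ideal.span {(pShift q i) ^ (s i)} from u)).symm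

lemma End_ext {W W' : Module.End F (Uspace F q m s)}
    (H : ∀ (i : Fin m) (h : Polynomial F), W (sgl q m s i h) = W' (sgl q m s i h)) :
    W = W' := by
  ext u
  obtain ⟨h, rfl⟩ := Uspace_rep q m s u
  simp only [map_sum, H]

lemma Aop_polySmul (u : Uspace F q m s) : Aop F q m s u = polySmul X u := rfl

lemma Aop_sgl (i : Fin m) (h : Polynomial F) :
    Aop F q m s (sgl q m s i h) = sgl q m s i (X * h) := by
  rw [Aop_polySmul, polySmul_sgl]

lemma Eop_apply (u : Uspace F q m s) (k : Fin m) :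
    Eop F q m s u k =
      Ideal.Quotient.mk (Ideal.span {(pShift q (k : ℕ)) ^ (s k)}) (X + C (k : F)) * u k := rfl

lemma Eop_sgl (i : Fin m) (h : Polynomial F) :
    Eop F q m s (sgl q m s i h) = sgl q m s i ((X + C (i : F)) * h) := by
  funext k
  by_cases hk : k = i
  · subst hk
    rw [Eop_apply, sgl, sgl, Pi.single_eq_same, Pi.single_eq_same, ← map_mul]
  · rw [Eop_apply, sgl, sgl, Pi.single_eq_of_ne hk, Pi.single_eq_of_ne hk, mul_zero]

lemma Epow_sgl (n : ℕ) (i : Fin m) (h : Polynomial F) :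
    (Eop F q m s ^ n) (sgl q m s i h) = sgl q m s i ((X + C (i : F)) ^ n * h) := by
  induction n with
  | zero => simp
  | succ n ih =>
    rw [pow_succ', Module.End.mul_apply, ih, Eop_sgl]
    ring_nf

end Aux

section Aux2

variable {F : Type*} [Field F] (q : Polynomial F) (m : ℕ) (s : Fin m → ℕ)

lemma aeval_Eop_sgl (g : Polynomial F) (i : Fin m) (h : Polynomial F) :
    (Polynomial.aeval (Eop F q m s) g) (sgl q m s i h) =
      sgl q m s i (g.comp (X + C (i : F)) * h) := by
  induction g using Polynomial.induction_on' with
  | add p r hp hr =>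
    rw [map_add, LinearMap.add_apply, hp, hr, add_comp, add_mul, sgl_add]
  | monomial n a =>
    rw [aeval_monomial, Module.End.mul_apply, Epow_sgl, Module.algebraMap_end_apply,
      sgl_smul, monomial_comp]
    ring_nf

variable {q m s} {T : Module.End F (Uspace F q m s)} (hT : IsTmap q m s T)

include hT

lemma T_polySmul (h : Polynomial F) (u : Uspace F q m s) :
    T (polySmul h u) = polySmul (h.comp (X + C (-1 : F))) (T u) := by
  have h2 : (h.comp (X + C (-1 : F))).comp (X + C 1) = h := by
    rw [comp_X_add_C_comp, neg_add_cancel, C_0, add_zero, comp_X]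
  calc T (polySmul h u) = T (polySmul ((h.comp (X + C (-1 : F))).comp (X + C 1)) u) := by
        rw [h2]
    _ = polySmul (h.comp (X + C (-1 : F))) (T u) := hT.2.2 _ u

lemma T_sgl_zero (h0 : 0 < m) (h : Polynomial F) : T (sgl q m s ⟨0, h0⟩ h) = 0 := by
  have e : sgl q m s ⟨0, h0⟩ h = polySmul h (uGen F q m s ⟨0, h0⟩) := by
    rw [uGen_eq, polySmul_sgl, mul_one]
  rw [e, T_polySmul hT, hT.1 h0, polySmul_zero']

lemma T_sgl_succ (k : ℕ) (hk : k + 1 < m) (h : Polynomial F) :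
    T (sgl q m s ⟨k + 1, hk⟩ h) =
      sgl q m s ⟨k, by omega⟩
        (h.comp (X + C (-1 : F)) * pShift q k ^ (s ⟨k, by omega⟩ - s ⟨k + 1, hk⟩)) := by
  have e : sgl q m s ⟨k + 1, hk⟩ h = polySmul h (uGen F q m s ⟨k + 1, hk⟩) := by
    rw [uGen_eq, polySmul_sgl, mul_one]
  rw [e, T_polySmul hT, hT.2.1 k hk, polySmul_polySmul, uGen_eq, polySmul_sgl, mul_one]

lemma Tpow_sgl (hdec : ∀ i j : Fin m, i ≤ j → s j ≤ s i) :
    ∀ (j : ℕ) (i k : Fin m) (h : Polynomial F), (k : ℕ) + j = (i : ℕ) →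
      (T ^ j) (sgl q m s i h) =
        sgl q m s k (h.comp (X + C (-(j : F))) * pShift q (k : ℕ) ^ (s k - s i)) := by
  intro j
  induction j with
  | zero =>
    intro i k h hk
    have : k = i := Fin.ext (by omega)
    subst this
    simp only [pow_zero, Module.End.one_apply, Nat.cast_zero, neg_zero, C_0, add_zero, comp_X,
      Nat.sub_self, pow_zero, mul_one]
  | succ j IH =>
    intro i k h hk
    have hn1 : (k : ℕ) + j + 1 < m := by omega
    have hi : i = ⟨(k : ℕ) + j + 1, hn1⟩ := Fin.ext (by simp; omega)
    subst hi
    rw [pow_succ, Module.End.mul_apply, T_sgl_succ hT ((k : ℕ) + j) hn1 h,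
      IH ⟨(k : ℕ) + j, by omega⟩ k _ (by simp)]
    have hps : (pShift q ((k : ℕ) + j)).comp (X + C (-(j : F))) = pShift q (k : ℕ) := by
      rw [show (k : ℕ) + j = j + (k : ℕ) by omega]
      exact pShift_add_comp q j (k : ℕ)
    rw [mul_comp, comp_X_add_C_comp, pow_comp, hps]
    have hc : (-1 : F) + (-(j : F)) = -((j + 1 : ℕ) : F) := by push_cast; ring
    rw [hc, mul_assoc, ← pow_add]
    have i1 : s ⟨(k : ℕ) + j + 1, hn1⟩ ≤ s ⟨(k : ℕ) + j, by omega⟩ :=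
      hdec _ _ (by simp [Fin.le_def])
    have i2 : s ⟨(k : ℕ) + j, by omega⟩ ≤ s k := hdec _ _ (by simp [Fin.le_def])
    exact congrArg
      (fun n => sgl q m s k (h.comp (X + C (-((j + 1 : ℕ) : F))) * pShift q (k : ℕ) ^ n))
      (by omega)

lemma Tpow_sgl_zero (hdec : ∀ i j : Fin m, i ≤ j → s j ≤ s i) (j : ℕ) (i : Fin m)
    (h : Polynomial F) (hj : (i : ℕ) < j) : (T ^ j) (sgl q m s i h) = 0 := by
  have e1 : T ^ j = T ^ (j - (i : ℕ) - 1) * (T * T ^ (i : ℕ)) := by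
    rw [← pow_succ', ← pow_add]
    congr 1
    omega
  rw [e1, Module.End.mul_apply, Module.End.mul_apply,
    Tpow_sgl hT hdec (i : ℕ) i ⟨0, by omega⟩ h (by simp),
    T_sgl_zero hT, map_zero]

end Aux2

section Aux3

variable {F : Type*} [Field F] {q : Polynomial F} {m : ℕ} {s : Fin m → ℕ}
  {T : Module.End F (Uspace F q m s)} (hT : IsTmap q m s T)

lemma psi_apply (j : ℕ) (g : Polynomial F) :
    psiMap q m s T j g = T ^ j * (Polynomial.aeval (Eop F q m s)) g := rfl

include hT

lemma psi_sgl (hdec : ∀ i j : Fin m, i ≤ j → s j ≤ s i) (g : Polynomial F) (j : ℕ)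
    (i k : Fin m) (h : Polynomial F) (hk : (k : ℕ) + j = (i : ℕ)) :
    psiMap q m s T j g (sgl q m s i h) =
      sgl q m s k ((g.comp (X + C (i : F)) * h).comp (X + C (-(j : F))) *
        pShift q (k : ℕ) ^ (s k - s i)) := by
  rw [psi_apply, Module.End.mul_apply, aeval_Eop_sgl, Tpow_sgl hT hdec j i k _ hk]

lemma psi_sgl_zero (hdec : ∀ i j : Fin m, i ≤ j → s j ≤ s i) (g : Polynomial F) (j : ℕ)
    (i : Fin m) (h : Polynomial F) (hj : (i : ℕ) < j) :
    psiMap q m s T j g (sgl q m s i h) = 0 := by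
  rw [psi_apply, Module.End.mul_apply, aeval_Eop_sgl, Tpow_sgl_zero hT hdec j i _ hj]

lemma commAT : Aop F q m s * T - T * Aop F q m s = T := by
  ext u
  have key := hT.2.2 X u
  rw [X_comp] at key
  have e1 : polySmul (q := q) (m := m) (s := s) (X + C 1) u = Aop F q m s u + u := by
    funext k
    show Ideal.Quotient.mk _ (X + C 1) * u k = Aop F q m s u k + u k
    rw [map_add, C_1, map_one, add_mul, one_mul]
    rfl
  have e2 : polySmul (q := q) (m := m) (s := s) X (T u) = Aop F q m s (T u) := rfl
  rw [e1, map_add, e2] at key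
  -- key : T (Aop u) + T u = Aop (T u)
  show Aop F q m s (T u) - T (Aop F q m s u) = T u
  rw [← key]
  abel

lemma commAE (g : Polynomial F) :
    Aop F q m s * (Polynomial.aeval (Eop F q m s)) g =
      (Polynomial.aeval (Eop F q m s)) g * Aop F q m s := by
  apply End_ext
  intro i h
  rw [Module.End.mul_apply, Module.End.mul_apply, aeval_Eop_sgl, Aop_sgl, Aop_sgl, aeval_Eop_sgl]
  ring_nf

lemma commTE (g : Polynomial F) :
    T * (Polynomial.aeval (Eop F q m s)) g = (Polynomial.aeval (Eop F q m s)) g * T := by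
  apply End_ext
  intro i h
  rcases i with ⟨iv, hi⟩
  rw [Module.End.mul_apply, Module.End.mul_apply, aeval_Eop_sgl]
  cases iv with
  | zero => rw [T_sgl_zero hT, T_sgl_zero hT, map_zero]
  | succ k =>
    rw [T_sgl_succ hT k hi, T_sgl_succ hT k hi, aeval_Eop_sgl]
    congr 1
    rw [mul_comp, comp_X_add_C_comp]
    have hval : ((⟨k + 1, hi⟩ : Fin m) : ℕ) = k + 1 := rfl
    have hval2 : ((⟨k, by omega⟩ : Fin m) : ℕ) = k := rfl
    rw [hval, hval2]
    have hcc : ((k + 1 : ℕ) : F) + (-1 : F) = ((k : ℕ) : F) := by push_cast; ring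
    rw [hcc]
    ring

lemma commTpowE (n : ℕ) (g : Polynomial F) :
    T ^ n * (Polynomial.aeval (Eop F q m s)) g =
      (Polynomial.aeval (Eop F q m s)) g * T ^ n :=
  Commute.pow_left (commTE hT g) n

lemma psi_comm (g h : Polynomial F) (j k : ℕ) :
    psiMap q m s T j g * psiMap q m s T k h = psiMap q m s T k h * psiMap q m s T j g := by
  rw [psi_apply, psi_apply]
  have e : ∀ (j' k' : ℕ) (g' h' : Polynomial F),
      (T ^ j' * (Polynomial.aeval (Eop F q m s)) g') * (T ^ k' * (Polynomial.aeval (Eop F q m s)) h') =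
        T ^ (j' + k') * (Polynomial.aeval (Eop F q m s)) (g' * h') := by
    intro j' k' g' h'
    rw [mul_assoc, ← mul_assoc ((Polynomial.aeval (Eop F q m s)) g'), ← commTpowE hT k' g',
      mul_assoc, ← mul_assoc, ← pow_add, ← map_mul]
  rw [e j k g h, e k j h g, Nat.add_comm k j, mul_comm h g]

lemma commA_Tpow (j : ℕ) :
    Aop F q m s * T ^ j = T ^ j * Aop F q m s + (j : F) • T ^ j := by
  induction j with
  | zero => simp
  | succ j ih =>
    have hAT : Aop F q m s * T = T * Aop F q m s + T := by
      have := commAT hT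
      rw [sub_eq_iff_eq_add] at this
      rw [this]
      abel
    rw [pow_succ, ← mul_assoc, ih, add_mul, mul_assoc, hAT, mul_add, smul_mul_assoc,
      ← mul_assoc, ← pow_succ]
    push_cast
    rw [add_smul, one_smul]
    abel

lemma psi_commA (g : Polynomial F) (j : ℕ) :
    Aop F q m s * psiMap q m s T j g - psiMap q m s T j g * Aop F q m s =
      (j : F) • psiMap q m s T j g := by
  have h1 : Aop F q m s * (T ^ j * (Polynomial.aeval (Eop F q m s)) g) =
      T ^ j * Aop F q m s * (Polynomial.aeval (Eop F q m s)) g +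
        (j : F) • (T ^ j * (Polynomial.aeval (Eop F q m s)) g) := by
    rw [← mul_assoc, commA_Tpow hT j, add_mul, smul_mul_assoc, mul_assoc]
  have h2 : (T ^ j * (Polynomial.aeval (Eop F q m s)) g) * Aop F q m s =
      T ^ j * Aop F q m s * (Polynomial.aeval (Eop F q m s)) g := by
    rw [mul_assoc, ← commAE hT g, mul_assoc]
  rw [psi_apply, h1, h2]
  abel

end Aux3

section Aux4

variable {F : Type*} [Field F] (q : Polynomial F) (m : ℕ) (s : Fin m → ℕ)

lemma sgl_apply_same (i : Fin m) (h : Polynomial F) :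
    sgl q m s i h i = Ideal.Quotient.mk (Ideal.span {(pShift q (i : ℕ)) ^ (s i)}) h :=
  Pi.single_eq_same i _

lemma sgl_apply_ne {k i : Fin m} (hki : k ≠ i) (h : Polynomial F) :
    sgl q m s i h k = 0 :=
  Pi.single_eq_of_ne hki _

/-- Evaluation at the `k`-th component, as an additive map. -/
noncomputable def evalk (k : Fin m) :
    Uspace F q m s →+ (Polynomial F ⧸ Ideal.span {(pShift q (k : ℕ)) ^ (s k)}) where
  toFun u := u k
  map_zero' := rfl
  map_add' _ _ := rfl

lemma evalk_smul (k : Fin m) (a : F) (u : Uspace F q m s) :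
    evalk q m s k (a • u) = a • (u k) := rfl

lemma dvd_of_evalk_sgl_eq_zero {i : Fin m} {h : Polynomial F}
    (hz : evalk q m s i (sgl q m s i h) = 0) : pShift q (i : ℕ) ^ (s i) ∣ h := by
  rw [← sgl_eq_zero_iff]
  funext k
  by_cases hk : k = i
  · subst hk
    exact hz
  · exact sgl_apply_ne q m s hk _

variable {q m s} {T : Module.End F (Uspace F q m s)} (hT : IsTmap q m s T)

include hT

lemma psi_ker (hdec : ∀ i j : Fin m, i ≤ j → s j ≤ s i) (hq : q.Monic) (j : Fin m)
    (w : Polynomial F) (hw : q ^ (s j) ∣ w) :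
    psiMap q m s T (j : ℕ) w = 0 := by
  apply End_ext
  intro i h
  rw [LinearMap.zero_apply]
  by_cases hij : (j : ℕ) ≤ (i : ℕ)
  · rw [psi_sgl hT hdec w (j : ℕ) i ⟨(i : ℕ) - (j : ℕ), by omega⟩ h
      (by show (i : ℕ) - (j : ℕ) + (j : ℕ) = (i : ℕ); omega),
      sgl_eq_zero_iff]
    obtain ⟨c, rfl⟩ := hw
    have hps : (q.comp (X + C ((i : ℕ) : F))).comp (X + C (-((j : ℕ) : F))) =
        pShift q ((i : ℕ) - (j : ℕ)) := by
      have e := pShift_add_comp q (j : ℕ) ((i : ℕ) - (j : ℕ))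
      rw [show (j : ℕ) + ((i : ℕ) - (j : ℕ)) = (i : ℕ) by omega] at e
      exact e
    simp only [mul_comp, pow_comp]
    rw [show (q.comp (X + C ((i : F)))).comp (X + C (-((j : ℕ) : F))) =
      pShift q ((i : ℕ) - (j : ℕ)) from hps]
    have hsij : s i ≤ s j := hdec j i (by rw [Fin.le_def]; omega)
    have hdv : pShift q ((i : ℕ) - (j : ℕ)) ^ (s ⟨(i : ℕ) - (j : ℕ), by omega⟩) ∣
        pShift q ((i : ℕ) - (j : ℕ)) ^ (s j) *
          pShift q ((i : ℕ) - (j : ℕ)) ^ (s ⟨(i : ℕ) - (j : ℕ), by omega⟩ - s i) := by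
      rw [← pow_add]
      exact pow_dvd_pow _ (by omega)
    refine dvd_trans hdv ⟨(c.comp (X + C ((i : ℕ) : F))).comp (X + C (-((j : ℕ) : F))) *
      h.comp (X + C (-((j : ℕ) : F))), by ring⟩
  · rw [psi_sgl_zero hT hdec w (j : ℕ) i h (by omega)]

lemma psi_mod (hdec : ∀ i j : Fin m, i ≤ j → s j ≤ s i) (hq : q.Monic) (d : ℕ)
    (hdeg : q.natDegree = d) (j : Fin m) (g : Polynomial F) :
    ∃ r ∈ degreeLT F (d * s j), psiMap q m s T (j : ℕ) g = psiMap q m s T (j : ℕ) r := by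
  refine ⟨g %ₘ q ^ (s j), ?_, ?_⟩
  · rw [mem_degreeLT]
    have h1 : (g %ₘ q ^ (s j)).degree < (q ^ (s j)).degree := degree_modByMonic_lt g (hq.pow _)
    have h2 : (q ^ (s j)).degree = ((d * s j : ℕ) : WithBot ℕ) := by
      rw [degree_eq_natDegree (hq.pow _).ne_zero, natDegree_pow, hdeg, Nat.mul_comm]
    rwa [h2] at h1
  · have hsub : psiMap q m s T (j : ℕ) g - psiMap q m s T (j : ℕ) (g %ₘ q ^ (s j)) = 0 := by
      rw [← map_sub]
      refine psi_ker hT hdec hq j _ ⟨g /ₘ q ^ (s j), ?_⟩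
      have := modByMonic_add_div g (q ^ (s j))
      linear_combination -this
    rw [← sub_eq_zero]
    exact hsub

lemma key_lt (hdec : ∀ i j : Fin m, i ≤ j → s j ≤ s i) (hq : q.Monic)
    {a : F} {g : Fin m → Polynomial F}
    (hW : a • Aop F q m s + ∑ j : Fin m, psiMap q m s T (j : ℕ) (g j) = 0)
    (i k : Fin m) (hk : (k : ℕ) < (i : ℕ)) :
    q ^ (s i) ∣ g ⟨(i : ℕ) - (k : ℕ), by omega⟩ := by
  set jd : Fin m := ⟨(i : ℕ) - (k : ℕ), by omega⟩ with hjd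
  have happ : a • (Aop F q m s (sgl q m s i 1)) +
      ∑ j : Fin m, psiMap q m s T (j : ℕ) (g j) (sgl q m s i 1) = 0 := by
    have h1 := congrArg (fun W : Module.End F (Uspace F q m s) => W (sgl q m s i 1)) hW
    simpa [LinearMap.add_apply, LinearMap.smul_apply, LinearMap.sum_apply] using h1
  have hc := congrArg (evalk q m s k) happ
  rw [map_add, map_sum, map_zero, evalk_smul] at hc
  have hterm : ∀ j : Fin m, j ∈ Finset.univ → j ≠ jd →
      evalk q m s k (psiMap q m s T (j : ℕ) (g j) (sgl q m s i 1)) = 0 := by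
    intro j _ hj
    by_cases hji : (j : ℕ) ≤ (i : ℕ)
    · rw [psi_sgl hT hdec _ _ i ⟨(i : ℕ) - (j : ℕ), by omega⟩ 1
        (by show (i : ℕ) - (j : ℕ) + (j : ℕ) = (i : ℕ); omega)]
      refine sgl_apply_ne q m s ?_ _
      intro hcontra
      apply hj
      apply Fin.ext
      have hval' : (k : ℕ) = (i : ℕ) - (j : ℕ) := congrArg Fin.val hcontra
      show (j : ℕ) = (i : ℕ) - (k : ℕ)
      omega
    · rw [psi_sgl_zero hT hdec _ _ i 1 (by omega)]
      rfl
  rw [Finset.sum_eq_single_of_mem jd (Finset.mem_univ jd) hterm] at hc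
  rw [psi_sgl hT hdec _ _ i k 1
    (by show (k : ℕ) + ((i : ℕ) - (k : ℕ)) = (i : ℕ); omega)] at hc
  have hAk : Aop F q m s (sgl q m s i 1) k = 0 := by
    rw [Aop_sgl]
    exact sgl_apply_ne q m s (by intro hc'; rw [hc'] at hk; omega) _
  rw [hAk, smul_zero, zero_add] at hc
  have hmk : Ideal.Quotient.mk (Ideal.span {(pShift q (k : ℕ)) ^ (s k)})
      (((g jd).comp (X + C ((i : ℕ) : F)) * 1).comp (X + C (-(((jd : ℕ)) : F))) *
        pShift q (k : ℕ) ^ (s k - s i)) = 0 := by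
    rw [← sgl_apply_same q m s k]
    exact hc
  have hdvd : pShift q (k : ℕ) ^ (s k) ∣
      ((g jd).comp (X + C ((i : ℕ) : F)) * 1).comp (X + C (-(((jd : ℕ)) : F))) *
        pShift q (k : ℕ) ^ (s k - s i) :=
    Ideal.mem_span_singleton.mp (Ideal.Quotient.eq_zero_iff_mem.mp hmk)
  rw [mul_one, comp_X_add_C_comp] at hdvd
  have hnat : (k : ℕ) + (jd : ℕ) = (i : ℕ) := by
    show (k : ℕ) + ((i : ℕ) - (k : ℕ)) = (i : ℕ)
    omega
  have hval : ((i : ℕ) : F) + -(((jd : ℕ)) : F) = ((k : ℕ) : F) := by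
    have h2 := congrArg (fun n : ℕ => (n : F)) hnat
    push_cast at h2
    linear_combination -h2
  rw [hval] at hdvd
  have hsik : s i ≤ s k := hdec k i (by rw [Fin.le_def]; omega)
  have hsplit : pShift q (k : ℕ) ^ (s k) =
      pShift q (k : ℕ) ^ (s k - s i) * pShift q (k : ℕ) ^ (s i) := by
    rw [← pow_add]
    congr 1
    omega
  rw [hsplit, mul_comm ((g jd).comp (X + C ((k : ℕ) : F)))] at hdvd
  have hcan := (mul_dvd_mul_iff_left
    (pow_ne_zero (s k - s i) (pShift_ne_zero hq (k : ℕ)))).mp hdvd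
  rw [← comp_dvd_iff (q ^ (s i)) (g jd) (((k : ℕ)) : F), pow_comp]
  exact hcan

lemma key_eq (hdec : ∀ i j : Fin m, i ≤ j → s j ≤ s i) (hq : q.Monic) (h0 : 0 < m)
    {a : F} {g : Fin m → Polynomial F}
    (hW : a • Aop F q m s + ∑ j : Fin m, psiMap q m s T (j : ℕ) (g j) = 0)
    (i : Fin m) :
    pShift q (i : ℕ) ^ (s i) ∣ C a * X + (g ⟨0, h0⟩).comp (X + C ((i : ℕ) : F)) := by
  set jd : Fin m := ⟨0, h0⟩ with hjd
  have happ : a • (Aop F q m s (sgl q m s i 1)) +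
      ∑ j : Fin m, psiMap q m s T (j : ℕ) (g j) (sgl q m s i 1) = 0 := by
    have h1 := congrArg (fun W : Module.End F (Uspace F q m s) => W (sgl q m s i 1)) hW
    simpa [LinearMap.add_apply, LinearMap.smul_apply, LinearMap.sum_apply] using h1
  have hc := congrArg (evalk q m s i) happ
  rw [map_add, map_sum, map_zero, evalk_smul] at hc
  have hterm : ∀ j : Fin m, j ∈ Finset.univ → j ≠ jd →
      evalk q m s i (psiMap q m s T (j : ℕ) (g j) (sgl q m s i 1)) = 0 := by
    intro j _ hj
    have hj1 : 1 ≤ (j : ℕ) := by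
      rcases Nat.eq_zero_or_pos (j : ℕ) with h | h
      · exact absurd (Fin.ext (h.trans (by rfl))) hj
      · exact h
    by_cases hji : (j : ℕ) ≤ (i : ℕ)
    · rw [psi_sgl hT hdec _ _ i ⟨(i : ℕ) - (j : ℕ), by omega⟩ 1
        (by show (i : ℕ) - (j : ℕ) + (j : ℕ) = (i : ℕ); omega)]
      refine sgl_apply_ne q m s ?_ _
      intro hcontra
      have hval' : (i : ℕ) = (i : ℕ) - (j : ℕ) := congrArg Fin.val hcontra
      omega
    · rw [psi_sgl_zero hT hdec _ _ i 1 (by omega)]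
      rfl
  rw [Finset.sum_eq_single_of_mem jd (Finset.mem_univ jd) hterm] at hc
  rw [psi_sgl hT hdec _ _ i i 1 (by show (i : ℕ) + ((0 : ℕ)) = (i : ℕ); omega)] at hc
  rw [Aop_sgl, sgl_apply_same, smul_mk] at hc
  have hc2 : Ideal.Quotient.mk (Ideal.span {(pShift q (i : ℕ)) ^ (s i)})
      (C a * (X * 1) +
        ((g jd).comp (X + C ((i : ℕ) : F)) * 1).comp (X + C (-(((jd : ℕ)) : F))) *
          pShift q (i : ℕ) ^ (s i - s i)) = 0 := by
    rw [map_add]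
    rw [← sgl_apply_same q m s i (((g jd).comp (X + C ((i : ℕ) : F)) * 1).comp
      (X + C (-(((jd : ℕ)) : F))) * pShift q (i : ℕ) ^ (s i - s i))]
    exact hc
  have hdvd : pShift q (i : ℕ) ^ (s i) ∣
      C a * (X * 1) +
        ((g jd).comp (X + C ((i : ℕ) : F)) * 1).comp (X + C (-(((jd : ℕ)) : F))) *
          pShift q (i : ℕ) ^ (s i - s i) :=
    Ideal.mem_span_singleton.mp (Ideal.Quotient.eq_zero_iff_mem.mp hc2)
  have hz : (((jd : ℕ)) : F) = 0 := by
    show (((0 : ℕ)) : F) = 0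
    exact Nat.cast_zero
  rw [hz, neg_zero, C_0, add_zero, comp_X, mul_one, mul_one, Nat.sub_self, pow_zero,
    mul_one] at hdvd
  exact hdvd

end Aux4

section Aux5

variable {F : Type*} [Field F]

/-- The parametrisation of `⟨A⟩ ⊕ 𝓔 ⊕ T𝓔 ⊕ ⋯ ⊕ T^{m−1}𝓔`. -/
noncomputable def PhiMap (q : Polynomial F) (d m : ℕ) (s : Fin m → ℕ)
    (T : Module.End F (Uspace F q m s)) :
    (F × ((j : Fin m) → degreeLT F (d * s j))) →ₗ[F] Module.End F (Uspace F q m s) where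
  toFun av := av.1 • Aop F q m s + ∑ j : Fin m, psiMap q m s T (j : ℕ) (av.2 j : Polynomial F)
  map_add' x y := by
    simp only [Prod.fst_add, Prod.snd_add, Pi.add_apply, Submodule.coe_add, map_add,
      add_smul, Finset.sum_add_distrib]
    abel
  map_smul' c x := by
    simp only [Prod.smul_fst, Prod.smul_snd, Pi.smul_apply, SetLike.val_smul, map_smul,
      RingHom.id_apply, smul_add, Finset.smul_sum, smul_smul, smul_eq_mul]

lemma PhiMap_apply (q : Polynomial F) (d m : ℕ) (s : Fin m → ℕ)
    (T : Module.End F (Uspace F q m s)) (av : F × ((j : Fin m) → degreeLT F (d * s j))) :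
    PhiMap q d m s T av =
      av.1 • Aop F q m s + ∑ j : Fin m, psiMap q m s T (j : ℕ) (av.2 j : Polynomial F) := rfl

variable {q : Polynomial F} {d m : ℕ} {s : Fin m → ℕ}
  {T : Module.End F (Uspace F q m s)} (hT : IsTmap q m s T)

include hT

lemma Phi_inj (hdata : GoodData F q d m s) : Function.Injective (PhiMap q d m s T) := by
  rw [← LinearMap.ker_eq_bot, LinearMap.ker_eq_bot']
  rintro ⟨a, v⟩ hav
  have hW : a • Aop F q m s +
      ∑ j : Fin m, psiMap q m s T (j : ℕ) ((v j : Polynomial F)) = 0 := hav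
  have hd1 : 1 ≤ d := by
    have := hdata.irr.natDegree_pos
    rw [hdata.deg] at this
    omega
  have h0m : (0 : ℕ) < m := by have := hdata.hm; omega
  have hvan : ∀ j : Fin m, q ^ (s j) ∣ (v j : Polynomial F) → v j = 0 := by
    intro j hdvd
    by_contra hne
    have hgne : (v j : Polynomial F) ≠ 0 := fun hc => hne (Subtype.ext hc)
    have hle := natDegree_le_of_dvd hdvd hgne
    rw [natDegree_pow, hdata.deg] at hle
    have hlt : (v j : Polynomial F).natDegree < d * s j :=
      (natDegree_lt_iff_degree_lt hgne).mpr (mem_degreeLT.mp (v j).2)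
    rw [Nat.mul_comm (s j) d] at hle
    omega
  have hvj : ∀ j : Fin m, 1 ≤ (j : ℕ) → v j = 0 := by
    intro j hj1
    apply hvan j
    have hkl := key_lt hT hdata.dec hdata.monic hW j ⟨0, h0m⟩
      (by show (0 : ℕ) < (j : ℕ); omega)
    have hjj : (⟨(j : ℕ) - ((⟨0, h0m⟩ : Fin m) : ℕ), by omega⟩ : Fin m) = j :=
      Fin.ext (by show (j : ℕ) - 0 = (j : ℕ); omega)
    rwa [hjj] at hkl
  have D0 := key_eq hT hdata.dec hdata.monic h0m hW ⟨0, h0m⟩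
  have D1 := key_eq hT hdata.dec hdata.monic h0m hW ⟨1, hdata.hm⟩
  simp only [show (((⟨0, h0m⟩ : Fin m)) : ℕ) = 0 from rfl] at D0
  rw [pShift_zero, Nat.cast_zero, C_0, add_zero, comp_X] at D0
  simp only [show (((⟨1, hdata.hm⟩ : Fin m)) : ℕ) = 1 from rfl] at D1
  rw [Nat.cast_one] at D1
  have hw : (C a * (X - C 1) + (v ⟨0, h0m⟩ : Polynomial F)).comp (X + C (1 : F)) =
      C a * X + ((v ⟨0, h0m⟩ : Polynomial F)).comp (X + C 1) := by
    simp only [add_comp, mul_comp, sub_comp, C_comp, X_comp]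
    ring
  rw [← hw] at D1
  have hq1 : pShift q 1 ^ (s ⟨1, hdata.hm⟩) = (q ^ (s ⟨1, hdata.hm⟩)).comp (X + C (1 : F)) := by
    rw [pow_comp]
    unfold pShift
    rw [Nat.cast_one]
  rw [hq1, comp_dvd_iff] at D1
  have hs10 : s ⟨1, hdata.hm⟩ ≤ s ⟨0, h0m⟩ := hdata.dec _ _
    (by rw [Fin.le_def]; show (0 : ℕ) ≤ 1; omega)
  have hCa : q ^ (s ⟨1, hdata.hm⟩) ∣ C a := by
    have h01 : q ^ (s ⟨1, hdata.hm⟩) ∣ C a * X + (v ⟨0, h0m⟩ : Polynomial F) :=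
      dvd_trans (pow_dvd_pow q hs10) D0
    have hsb := dvd_sub h01 D1
    have hdiff : (C a * X + (v ⟨0, h0m⟩ : Polynomial F)) -
        (C a * (X - C 1) + (v ⟨0, h0m⟩ : Polynomial F)) = C a := by
      have h' : (C a * X + (v ⟨0, h0m⟩ : Polynomial F)) -
          (C a * (X - C 1) + (v ⟨0, h0m⟩ : Polynomial F)) = C a * C 1 := by ring
      rw [h', ← C_mul, mul_one]
    rwa [hdiff] at hsb
  have ha : a = 0 := by
    by_contra hne
    have hCne : (C a : Polynomial F) ≠ 0 := by simpa using hne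
    have hle := natDegree_le_of_dvd hCa hCne
    rw [natDegree_pow, hdata.deg, natDegree_C] at hle
    have hp1 := hdata.pos ⟨1, hdata.hm⟩
    have := Nat.mul_le_mul hp1 hd1
    omega
  subst ha
  have hg0 : v ⟨0, h0m⟩ = 0 := by
    apply hvan
    simpa using D0
  have hvz : v = 0 := by
    funext j
    by_cases hj : (j : ℕ) = 0
    · have : j = ⟨0, h0m⟩ := Fin.ext hj
      rw [this, hg0]
      rfl
    · rw [hvj j (by omega)]
      rfl
  rw [hvz]
  rfl

lemma Phi_range (hdata : GoodData F q d m s) :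
    LinearMap.range (PhiMap q d m s T) =
      (F ∙ Aop F q m s) ⊔ ⨆ j : Fin m, LinearMap.range (psiMap q m s T (j : ℕ)) := by
  apply le_antisymm
  · rintro x ⟨⟨a, v⟩, rfl⟩
    rw [PhiMap_apply]
    refine Submodule.add_mem _
      (Submodule.mem_sup_left (Submodule.smul_mem _ _ (Submodule.mem_span_singleton_self _)))
      (Submodule.sum_mem _ fun j _ =>
        Submodule.mem_sup_right (Submodule.mem_iSup_of_mem j ⟨_, rfl⟩))
  · rw [sup_le_iff]
    constructor
    · rw [Submodule.span_singleton_le_iff_mem]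
      refine ⟨(1, 0), ?_⟩
      rw [PhiMap_apply]
      simp
    · refine iSup_le fun j => ?_
      rintro x ⟨g, rfl⟩
      obtain ⟨r, hr, he⟩ := psi_mod hT hdata.dec hdata.monic d hdata.deg j g
      refine ⟨(0, Pi.single j ⟨r, hr⟩), ?_⟩
      rw [PhiMap_apply, zero_smul, zero_add,
        Finset.sum_eq_single_of_mem j (Finset.mem_univ j) ?_]
      · show psiMap q m s T (j : ℕ)
            (((Pi.single j ⟨r, hr⟩ : (j' : Fin m) → degreeLT F (d * s j')) j : Polynomial F)) =
          psiMap q m s T (j : ℕ) g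
        rw [Pi.single_eq_same]
        exact he.symm
      · intro j' _ hj'
        show psiMap q m s T (j' : ℕ)
            (((Pi.single j ⟨r, hr⟩ : (j'' : Fin m) → degreeLT F (d * s j'')) j' :
              Polynomial F)) = 0
        rw [Pi.single_eq_of_ne hj']
        simp

omit hT

lemma finrank_dom (d : ℕ) (s : Fin m → ℕ) :
    Module.finrank F (F × ((j : Fin m) → degreeLT F (d * s j))) =
      1 + ∑ j : Fin m, d * s j := by
  haveI : ∀ j : Fin m, Module.Finite F (degreeLT F (d * s j)) := fun j =>
    Module.Finite.equiv (degreeLTEquiv F (d * s j)).symm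
  rw [Module.finrank_prod, Module.finrank_self, Module.finrank_pi_fintype]
  congr 1
  refine Finset.sum_congr rfl fun j _ => ?_
  rw [LinearEquiv.finrank_eq (degreeLTEquiv F (d * s j)), Module.finrank_pi, Fintype.card_fin]

lemma finrank_U (hdata : GoodData F q d m s) :
    Module.finrank F (Uspace F q m s) = ∑ i : Fin m, d * s i := by
  have hmon : ∀ i : Fin m, ((pShift q (i : ℕ)) ^ (s i)).Monic := fun i =>
    (pShift_monic hdata.monic _).pow _
  haveI : ∀ i : Fin m, Module.Finite F (Polynomial F ⧸ Ideal.span {(pShift q (i : ℕ)) ^ (s i)}) :=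
    fun i => (AdjoinRoot.powerBasis' (hmon i)).finite
  have e1 : Module.finrank F (Uspace F q m s) =
      Module.finrank F ((i : Fin m) → Polynomial F ⧸ Ideal.span {(pShift q (i : ℕ)) ^ (s i)}) :=
    rfl
  rw [e1, Module.finrank_pi_fintype]
  refine Finset.sum_congr rfl fun i _ => ?_
  calc Module.finrank F (Polynomial F ⧸ Ideal.span {(pShift q (i : ℕ)) ^ (s i)})
      = ((pShift q (i : ℕ)) ^ (s i)).natDegree := (AdjoinRoot.powerBasis' (hmon i)).finrank
    _ = d * s i := by rw [natDegree_pow, pShift_natDegree, hdata.deg, Nat.mul_comm]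

end Aux5

section Aux6

variable {F : Type*} [Field F]

/-- The parametrisation of `⟨A⟩ ⊕ ⟨T⟩`. -/
noncomputable def ThetaMap (q : Polynomial F) (m : ℕ) (s : Fin m → ℕ)
    (T : Module.End F (Uspace F q m s)) :
    (F × F) →ₗ[F] Module.End F (Uspace F q m s) where
  toFun p := p.1 • Aop F q m s + p.2 • T
  map_add' x y := by
    simp only [Prod.fst_add, Prod.snd_add, add_smul]
    abel
  map_smul' c x := by
    simp only [Prod.smul_fst, Prod.smul_snd, smul_smul, smul_eq_mul, RingHom.id_apply,
      smul_add]

lemma ThetaMap_apply (q : Polynomial F) (m : ℕ) (s : Fin m → ℕ)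
    (T : Module.End F (Uspace F q m s)) (p : F × F) :
    ThetaMap q m s T p = p.1 • Aop F q m s + p.2 • T := rfl

variable {q : Polynomial F} {d m : ℕ} {s : Fin m → ℕ}
  {T : Module.End F (Uspace F q m s)} (hT : IsTmap q m s T)

include hT

lemma Theta_inj (hdata : GoodData F q d m s) : Function.Injective (ThetaMap q m s T) := by
  rw [← LinearMap.ker_eq_bot, LinearMap.ker_eq_bot']
  rintro ⟨a, b⟩ hab
  have hW : a • Aop F q m s + b • T = 0 := hab
  have h0m : (0 : ℕ) < m := by have := hdata.hm; omega
  have hd1 : 1 ≤ d := by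
    have := hdata.irr.natDegree_pos
    rw [hdata.deg] at this
    omega
  have hne01 : (⟨1, hdata.hm⟩ : Fin m) ≠ ⟨0, h0m⟩ := by
    intro hcc
    have : (1 : ℕ) = 0 := congrArg Fin.val hcc
    omega
  -- apply to u₁
  have h1 := congrArg (fun W : Module.End F (Uspace F q m s) =>
    W (sgl q m s ⟨1, hdata.hm⟩ 1)) hW
  simp only [LinearMap.add_apply, LinearMap.smul_apply, LinearMap.zero_apply] at h1
  rw [Aop_sgl, T_sgl_succ hT 0 hdata.hm 1, sgl_smul, sgl_smul] at h1
  simp only [show (0 : ℕ) + 1 = 1 from rfl] at h1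
  -- component 1 of h1
  have h1a := congrArg (evalk q m s ⟨1, hdata.hm⟩) h1
  rw [map_add, map_zero] at h1a
  have e1 : evalk q m s ⟨1, hdata.hm⟩
      (sgl q m s ⟨0, h0m⟩ (C b * ((1 : Polynomial F).comp (X + C (-1 : F)) *
        pShift q 0 ^ (s ⟨0, h0m⟩ - s ⟨1, hdata.hm⟩)))) = 0 := by
    exact sgl_apply_ne q m s hne01
      (C b * ((1 : Polynomial F).comp (X + C (-1 : F)) *
        pShift q 0 ^ (s ⟨0, h0m⟩ - s ⟨1, hdata.hm⟩)))
  rw [e1, add_zero] at h1a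
  have h1A : pShift q ((⟨1, hdata.hm⟩ : Fin m) : ℕ) ^ (s ⟨1, hdata.hm⟩) ∣ C a * (X * 1) :=
    dvd_of_evalk_sgl_eq_zero q m s h1a
  -- component 0 of h1
  have h1b := congrArg (evalk q m s ⟨0, h0m⟩) h1
  rw [map_add, map_zero] at h1b
  have e2 : evalk q m s ⟨0, h0m⟩ (sgl q m s ⟨1, hdata.hm⟩ (C a * (X * 1))) = 0 := by
    exact sgl_apply_ne q m s (fun hcc => hne01 hcc.symm) (C a * (X * 1))
  rw [e2, zero_add] at h1b
  have h1B : pShift q ((⟨0, h0m⟩ : Fin m) : ℕ) ^ (s ⟨0, h0m⟩) ∣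
      C b * ((1 : Polynomial F).comp (X + C (-1 : F)) *
        pShift q 0 ^ (s ⟨0, h0m⟩ - s ⟨1, hdata.hm⟩)) :=
    dvd_of_evalk_sgl_eq_zero q m s h1b
  -- apply to u₀
  have h0 := congrArg (fun W : Module.End F (Uspace F q m s) =>
    W (sgl q m s ⟨0, h0m⟩ 1)) hW
  simp only [LinearMap.add_apply, LinearMap.smul_apply, LinearMap.zero_apply] at h0
  rw [Aop_sgl, T_sgl_zero hT, smul_zero, add_zero, sgl_smul, sgl_eq_zero_iff] at h0
  -- h0 : pShift q 0 ^ s ⟨0⟩ ∣ C a * (X * 1)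
  have ha : a = 0 := by
    by_contra hane
    have hCX : (C a * (X * 1) : Polynomial F) ≠ 0 := by
      rw [mul_one]
      exact mul_ne_zero (by simpa using hane) X_ne_zero
    have hnd : (C a * (X * 1) : Polynomial F).natDegree = 1 := by
      rw [mul_one]
      exact natDegree_C_mul_X a hane
    have hle0 := natDegree_le_of_dvd h0 hCX
    have hle1 := natDegree_le_of_dvd h1A hCX
    rw [natDegree_pow, pShift_natDegree, hdata.deg, hnd] at hle0 hle1
    have hp0 := hdata.pos ⟨0, h0m⟩
    have hp1 := hdata.pos ⟨1, hdata.hm⟩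
    have hA := Nat.le_mul_of_pos_right (s ⟨0, h0m⟩) (show 0 < d by omega)
    have hB := Nat.le_mul_of_pos_left d (show 0 < s ⟨0, h0m⟩ by omega)
    have hC := Nat.le_mul_of_pos_right (s ⟨1, hdata.hm⟩) (show 0 < d by omega)
    have hds0 : s ⟨0, h0m⟩ = 1 ∧ d = 1 := by omega
    have hds1 : s ⟨1, hdata.hm⟩ = 1 := by omega
    -- monic degree-one q
    have hq1 : q = X + C (q.coeff 0) := hdata.monic.eq_X_add_C (by rw [hdata.deg, hds0.2])
    -- pShift q 0 = q divides C a * X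
    have hdv0 : q ∣ C a * X := by
      have := h0
      rw [show ((⟨0, h0m⟩ : Fin m) : ℕ) = 0 from rfl, pShift_zero, hds0.1, pow_one, mul_one]
        at this
      exact this
    have hdv1 : q.comp (X + C (1 : F)) ∣ C a * X := by
      have := h1A
      rw [show ((⟨1, hdata.hm⟩ : Fin m) : ℕ) = 1 from rfl, hds1, pow_one, mul_one] at this
      unfold pShift at this
      rwa [Nat.cast_one] at this
    have hroot0 : a * -(q.coeff 0) = 0 := by
      have : IsRoot (C a * X) (-(q.coeff 0)) := by
        rw [← dvd_iff_isRoot]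
        rw [C_neg, sub_neg_eq_add, ← hq1]
        exact hdv0
      simpa using this
    have hroot1 : a * -(q.coeff 0 + 1) = 0 := by
      have hcomp : q.comp (X + C (1 : F)) = X + C (q.coeff 0 + 1) := by
        conv_lhs => rw [hq1]
        simp only [add_comp, X_comp, C_comp]
        rw [add_assoc, ← C_add, add_comm (1 : F)]
      have : IsRoot (C a * X) (-(q.coeff 0 + 1)) := by
        rw [← dvd_iff_isRoot]
        rw [C_neg, sub_neg_eq_add, ← hcomp]
        exact hdv1
      simpa using this
    have hc0 : q.coeff 0 = 0 := by
      rcases mul_eq_zero.mp hroot0 with h | h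
      · exact absurd h hane
      · exact neg_eq_zero.mp h
    have hc1 : q.coeff 0 + 1 = 0 := by
      rcases mul_eq_zero.mp hroot1 with h | h
      · exact absurd h hane
      · exact neg_eq_zero.mp h
    rw [hc0, zero_add] at hc1
    exact one_ne_zero hc1
  subst ha
  have hb : b = 0 := by
    by_contra hbne
    have hP : (1 : Polynomial F).comp (X + C (-1 : F)) = 1 := one_comp
    rw [hP, one_mul, show ((⟨0, h0m⟩ : Fin m) : ℕ) = 0 from rfl, pShift_zero] at h1B
    have hs10 : s ⟨1, hdata.hm⟩ ≤ s ⟨0, h0m⟩ := hdata.dec _ _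
      (by rw [Fin.le_def]; show (0 : ℕ) ≤ 1; omega)
    have hsplit : q ^ (s ⟨0, h0m⟩) =
        q ^ (s ⟨0, h0m⟩ - s ⟨1, hdata.hm⟩) * q ^ (s ⟨1, hdata.hm⟩) := by
      rw [← pow_add]
      congr 1
      omega
    rw [hsplit, mul_comm (C b)] at h1B
    have hcan := (mul_dvd_mul_iff_left
      (pow_ne_zero (s ⟨0, h0m⟩ - s ⟨1, hdata.hm⟩) hdata.monic.ne_zero)).mp h1B
    have hCbne : (C b : Polynomial F) ≠ 0 := by simpa using hbne
    have hle := natDegree_le_of_dvd hcan hCbne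
    rw [natDegree_pow, hdata.deg, natDegree_C] at hle
    have hp1 := hdata.pos ⟨1, hdata.hm⟩
    have := Nat.mul_le_mul hp1 hd1
    omega
  subst hb
  rfl

lemma Theta_range :
    LinearMap.range (ThetaMap q m s T) = (F ∙ Aop F q m s) ⊔ (F ∙ T) := by
  apply le_antisymm
  · rintro x ⟨⟨a, b⟩, rfl⟩
    rw [ThetaMap_apply]
    exact Submodule.add_mem _
      (Submodule.mem_sup_left (Submodule.smul_mem _ _ (Submodule.mem_span_singleton_self _)))
      (Submodule.mem_sup_right (Submodule.smul_mem _ _ (Submodule.mem_span_singleton_self _)))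
  · rw [sup_le_iff]
    constructor
    · rw [Submodule.span_singleton_le_iff_mem]
      exact ⟨(1, 0), by rw [ThetaMap_apply]; simp⟩
    · rw [Submodule.span_singleton_le_iff_mem]
      exact ⟨(0, 1), by rw [ThetaMap_apply]; simp⟩

end Aux6

/-- The subspace `g = ⟨A⟩ ⊕ 𝓔 ⊕ T𝓔 ⊕ ⋯ ⊕ T^{m−1}𝓔` of `End_F(U)` is a
Lie subalgebra of `gl(U)` (it is closed under commutators) of dimension `dim_F U + 1`;
explicitly `[A, T^j g(E)] = j·T^j g(E)` for all `g ∈ F[X]`, `0 ≤ j < m`, and the elements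
of `𝓔 ⊕ T𝓔 ⊕ ⋯ ⊕ T^{m−1}𝓔` commute with each other.  In particular `s = ⟨A⟩ ⊕ ⟨T⟩` is a
2-dimensional subalgebra with `[A, T] = T`. -/
theorem lie_subalgebra_A_E_T
    {F : Type*} [Field F] (q : Polynomial F) (d m : ℕ) (s : Fin m → ℕ)
    (hdata : GoodData F q d m s)
    (T : Module.End F (Uspace F q m s)) (hT : IsTmap q m s T) :
    (∀ z w : Module.End F (Uspace F q m s),
        z ∈ (F ∙ Aop F q m s) ⊔ (⨆ j : Fin m, LinearMap.range (psiMap q m s T j)) →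
        w ∈ (F ∙ Aop F q m s) ⊔ (⨆ j : Fin m, LinearMap.range (psiMap q m s T j)) →
        z * w - w * z ∈
          (F ∙ Aop F q m s) ⊔ (⨆ j : Fin m, LinearMap.range (psiMap q m s T j))) ∧
    Module.finrank F
        ((F ∙ Aop F q m s) ⊔ (⨆ j : Fin m, LinearMap.range (psiMap q m s T j)) :
          Submodule F (Module.End F (Uspace F q m s))) =
      Module.finrank F (Uspace F q m s) + 1 ∧
    (∀ (g : Polynomial F) (j : ℕ), j < m →
        Aop F q m s * psiMap q m s T j g - psiMap q m s T j g * Aop F q m s =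
          (j : F) • psiMap q m s T j g) ∧
    (∀ (g h : Polynomial F) (j k : ℕ), j < m → k < m →
        psiMap q m s T j g * psiMap q m s T k h = psiMap q m s T k h * psiMap q m s T j g) ∧
    Module.finrank F ((F ∙ Aop F q m s) ⊔ (F ∙ T) :
        Submodule F (Module.End F (Uspace F q m s))) = 2 ∧
    Aop F q m s * T - T * Aop F q m s = T := by
  refine ⟨?_, ?_, fun g j _ => psi_commA hT g j, fun g h j k _ _ => psi_comm hT g h j k,
    ?_, commAT hT⟩
  · -- closure under commutators
    set N : Submodule F (Module.End F (Uspace F q m s)) :=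
      ⨆ j : Fin m, LinearMap.range (psiMap q m s T (j : ℕ)) with hNdef
    intro z w hz hw
    have hcomm : ∀ x ∈ N, ∀ y ∈ N, x * y = y * x := by
      intro x hx
      refine Submodule.iSup_induction (motive := fun x => ∀ y ∈ N, x * y = y * x) _ hx ?_ ?_ ?_
      · rintro j x' ⟨g, rfl⟩ y hy
        refine Submodule.iSup_induction
          (motive := fun y => psiMap q m s T (j : ℕ) g * y = y * psiMap q m s T (j : ℕ) g)
          _ hy ?_ ?_ ?_
        · rintro k y' ⟨h, rfl⟩
          exact psi_comm hT g h (j : ℕ) (k : ℕ)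
        · simp
        · intro y1 y2 hy1 hy2
          rw [mul_add, add_mul, hy1, hy2]
      · intro y hy
        simp
      · intro x1 x2 hx1 hx2 y hy
        rw [add_mul, mul_add, hx1 y hy, hx2 y hy]
    have hAn : ∀ x ∈ N, Aop F q m s * x - x * Aop F q m s ∈ N := by
      intro x hx
      refine Submodule.iSup_induction
        (motive := fun x => Aop F q m s * x - x * Aop F q m s ∈ N) _ hx ?_ ?_ ?_
      · rintro j x' ⟨g, rfl⟩
        rw [psi_commA hT g (j : ℕ)]
        exact Submodule.smul_mem _ _ (Submodule.mem_iSup_of_mem j ⟨g, rfl⟩)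
      · simp
      · intro x1 x2 hx1 hx2
        have he : Aop F q m s * (x1 + x2) - (x1 + x2) * Aop F q m s =
            (Aop F q m s * x1 - x1 * Aop F q m s) + (Aop F q m s * x2 - x2 * Aop F q m s) := by
          noncomm_ring
        rw [he]
        exact Submodule.add_mem _ hx1 hx2
    obtain ⟨z1, hz1, z2, hz2, rfl⟩ := Submodule.mem_sup.mp hz
    obtain ⟨w1, hw1, w2, hw2, rfl⟩ := Submodule.mem_sup.mp hw
    obtain ⟨c, rfl⟩ := Submodule.mem_span_singleton.mp hz1
    obtain ⟨e, rfl⟩ := Submodule.mem_span_singleton.mp hw1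
    have hexp : (c • Aop F q m s + z2) * (e • Aop F q m s + w2) -
        (e • Aop F q m s + w2) * (c • Aop F q m s + z2) =
        c • (Aop F q m s * w2 - w2 * Aop F q m s) +
          (-e) • (Aop F q m s * z2 - z2 * Aop F q m s) + (z2 * w2 - w2 * z2) := by
      simp only [add_mul, mul_add, smul_mul_assoc, mul_smul_comm, smul_smul, smul_sub,
        neg_smul, smul_add]
      rw [mul_comm e c]
      abel
    rw [hexp, hcomm z2 hz2 w2 hw2, sub_self, add_zero]
    refine Submodule.add_mem _ ?_ ?_
    · exact Submodule.mem_sup_right (Submodule.smul_mem _ _ (hAn w2 hw2))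
    · exact Submodule.mem_sup_right (Submodule.smul_mem _ _ (hAn z2 hz2))
  · -- dimension of the big subalgebra
    rw [← Phi_range hT hdata, LinearMap.finrank_range_of_inj (Phi_inj hT hdata),
      finrank_dom d s, finrank_U hdata, Nat.add_comm]
  · -- dimension of ⟨A⟩ ⊕ ⟨T⟩
    rw [← Theta_range hT, LinearMap.finrank_range_of_inj (Theta_inj hT hdata),
      Module.finrank_prod, Module.finrank_self]
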